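/- Let K be a noncompact locally compact Hausdorff space in which every σ-compact subset has compact closure (i.e., K is of class K_IV). Then there is no frame in C₀(K): there exist no index set J, no family (x_j)_{j∈J} of elements of C₀(K), and no constants 0 < c₁ ≤ c₂ forming a pointwise frame, i.e., such that for every t ∈ K the family (|x_j(t)|²)_{j∈J} is summable and c₁ ≤ Σ_{j∈J} |x_j(t)|² ≤ c₂. -/

import Mathlib

open ZeroAtInfty

universe u

/-- Let `K` be a noncompact locally compact Hausdorff space in which every `σ`-compact
subset has compact closure (class `K_IV`). Then there is no (pointwise) frame in `C₀(K)`: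
there are no index set `J`, family `(x j)` in `C₀(K)` and constants `0 < c₁ ≤ c₂` such that
for every `t ∈ K` the family `(‖x j t‖ ^ 2)` is summable with
`c₁ ≤ ∑' j, ‖x j t‖ ^ 2 ≤ c₂`. -/
theorem no_frame_of_KIV
    (K : Type*) [TopologicalSpace K] [LocallyCompactSpace K] [T2Space K]
    (hnc : ¬ CompactSpace K)
    (hIV : ∀ s : Set K, IsSigmaCompact s → IsCompact (closure s)) :
    ¬ ∃ (J : Type u) (x : J → C₀(K, ℂ)) (c₁ c₂ : ℝ), 0 < c₁ ∧ c₁ ≤ c₂ ∧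
        ∀ t : K, Summable (fun j : J => ‖x j t‖ ^ 2) ∧
          c₁ ≤ ∑' j : J, ‖x j t‖ ^ 2 ∧ (∑' j : J, ‖x j t‖ ^ 2) ≤ c₂ := by
  classical
  rintro ⟨J, x, c₁, c₂, hc₁, hc₁₂, hframe⟩
  -- K is nonempty
  have hKne : Nonempty K := by
    by_contra h
    have : IsEmpty K := not_nonempty_iff.mp h
    exact hnc inferInstance
  -- each "nonzero set" of a C₀ function is σ-compact
  have hN : ∀ j : J, IsSigmaCompact {t : K | x j t ≠ 0} := by
    intro j
    have hEq : {t : K | x j t ≠ 0} = ⋃ k : ℕ, {t : K | 1 / ((k : ℝ) + 1) ≤ ‖x j t‖} := by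
      ext s
      simp only [Set.mem_setOf_eq, Set.mem_iUnion]
      constructor
      · intro h
        have hp : (0 : ℝ) < ‖x j s‖ := norm_pos_iff.mpr h
        obtain ⟨k, hk⟩ := exists_nat_one_div_lt hp
        exact ⟨k, hk.le⟩
      · rintro ⟨k, hk⟩
        have hpos : (0 : ℝ) < 1 / ((k : ℝ) + 1) := by positivity
        have : (0 : ℝ) < ‖x j s‖ := lt_of_lt_of_le hpos hk
        exact norm_pos_iff.mp this
    rw [hEq]
    apply isSigmaCompact_iUnion_of_isCompact
    intro k
    have hpos : (0 : ℝ) < 1 / ((k : ℝ) + 1) := by positivity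
    have hball : {c : ℂ | ‖c‖ < 1 / ((k : ℝ) + 1)} ∈ nhds (0 : ℂ) := by
      have := Metric.ball_mem_nhds (0 : ℂ) hpos
      simpa [Metric.ball, dist_eq_norm] using this
    have hmem : (⇑(x j)) ⁻¹' {c : ℂ | ‖c‖ < 1 / ((k : ℝ) + 1)} ∈ Filter.cocompact K :=
      (zero_at_infty (x j)) hball
    obtain ⟨C, hC, hCsub⟩ := Filter.mem_cocompact.mp hmem
    have hclosed : IsClosed {t : K | 1 / ((k : ℝ) + 1) ≤ ‖x j t‖} :=
      isClosed_le continuous_const ((x j).continuous.norm)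
    have hsub : {t : K | 1 / ((k : ℝ) + 1) ≤ ‖x j t‖} ⊆ C := by
      intro s hs
      by_contra hsC
      have h2 : ‖(x j) s‖ < 1 / ((k : ℝ) + 1) := hCsub hsC
      exact absurd hs (not_le.mpr h2)
    exact hC.of_isClosed_subset hclosed hsub
  -- the countable "index set" of each point
  set Jset : K → Set J := fun p => {j | x j p ≠ 0} with hJset
  have hJcount : ∀ p : K, (Jset p).Countable := by
    intro p
    have := (hframe p).1.countable_support
    have hEq : Function.support (fun j : J => ‖x j p‖ ^ 2) = Jset p := by
      ext j
      simp [Function.support, Jset, pow_eq_zero_iff, norm_eq_zero]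
    rwa [hEq] at this
  -- the σ-compact "spread" of each point
  set S : K → Set K := fun p => ⋃ j ∈ Jset p, {t : K | x j t ≠ 0} with hS
  have hScompact : ∀ p : K, IsSigmaCompact (S p) :=
    fun p => isSigmaCompact_biUnion (hJcount p) (fun j _ => hN j)
  -- a choice of a point outside any σ-compact set
  have hpick : ∀ s : Set K, ∃ p : K, IsSigmaCompact s → p ∉ s := by
    intro s
    by_cases hs : IsSigmaCompact s
    · have hcl : IsCompact (closure s) := hIV s hs
      have : closure s ≠ Set.univ := by
        intro h
        exact hnc (isCompact_univ_iff.mp (h ▸ hcl))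
      obtain ⟨p, hp⟩ : ∃ p : K, p ∉ closure s := by
        by_contra h
        push_neg at h
        exact this (Set.eq_univ_iff_forall.mpr h)
      exact ⟨p, fun _ => fun hps => hp (subset_closure hps)⟩
    · exact ⟨Classical.arbitrary K, fun h => absurd h hs⟩
  choose pick hpickSpec using hpick
  -- recursive construction
  set A : ℕ → Set K := fun n => Nat.rec (∅ : Set K) (fun _ s => s ∪ S (pick s)) n with hA
  set t : ℕ → K := fun n => pick (A n) with ht
  have hAsucc : ∀ n, A (n + 1) = A n ∪ S (t n) := fun n => rfl
  have hAsc : ∀ n, IsSigmaCompact (A n) := by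
    intro n
    induction n with
    | zero => exact isSigmaCompact_empty
    | succ n ih =>
      rw [hAsucc, Set.union_eq_iUnion]
      exact isSigmaCompact_iUnion _ (fun b => by cases b <;> simp [ih, hScompact])
  have htA : ∀ n, t n ∉ A n := fun n => hpickSpec (A n) (hAsc n)
  have hAmono : ∀ m n : ℕ, m ≤ n → A m ⊆ A n := by
    intro m n hmn
    induction n with
    | zero => simp [Nat.le_zero.mp hmn]
    | succ n ih =>
      rcases Nat.lt_or_ge m (n + 1) with h | h
      · exact (ih (Nat.lt_succ_iff.mp h)).trans (by rw [hAsucc]; exact Set.subset_union_left)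
      · have : m = n + 1 := le_antisymm hmn h
        simp [this]
  have hdisj : ∀ m n : ℕ, m < n → t n ∉ S (t m) := by
    intro m n hmn hmem
    have h1 : S (t m) ⊆ A (m + 1) := by rw [hAsucc]; exact Set.subset_union_right
    exact htA n (hAmono (m + 1) n hmn (h1 hmem))
  -- a cluster point of the sequence
  have hrange : IsSigmaCompact (Set.range t) := by
    rw [Set.range_eq_iUnion]
    exact isSigmaCompact_iUnion_of_isCompact _ (fun n => isCompact_singleton)
  have hL : IsCompact (closure (Set.range t)) := hIV _ hrange
  have hle : Filter.map t Filter.atTop ≤ Filter.principal (closure (Set.range t)) := by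
    rw [Filter.le_principal_iff, Filter.mem_map]
    exact Filter.Eventually.of_forall (fun n => subset_closure (Set.mem_range_self n))
  obtain ⟨p, hpL, hp⟩ := hL.exists_clusterPt hle
  -- the frame condition at p
  obtain ⟨hsum, hlow, hupp⟩ := hframe p
  have hhalf : c₁ / 2 < ∑' j : J, ‖x j p‖ ^ 2 := lt_of_lt_of_le (by linarith) hlow
  obtain ⟨G, hG⟩ : ∃ G : Finset J, c₁ / 2 < ∑ j ∈ G, ‖x j p‖ ^ 2 := by
    have := hsum.hasSum.eventually (eventually_gt_nhds hhalf)
    exact this.exists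
  -- the continuous finite partial-sum function
  have hrcont : Continuous (fun s : K => ∑ j ∈ G, ‖x j s‖ ^ 2) :=
    continuous_finset_sum _ (fun j _ => ((x j).continuous.norm.pow 2))
  have hU : {s : K | c₁ / 2 < ∑ j ∈ G, ‖x j s‖ ^ 2} ∈ nhds p :=
    hrcont.continuousAt.preimage_mem_nhds (by exact Ioi_mem_nhds hG)
  have hfreq : ∃ᶠ n in Filter.atTop, t n ∈ {s : K | c₁ / 2 < ∑ j ∈ G, ‖x j s‖ ^ 2} := by
    have hmcp : MapClusterPt p Filter.atTop t := hp
    exact (mapClusterPt_iff_frequently.mp hmcp) _ hU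
  have hMinf : {n : ℕ | c₁ / 2 < ∑ j ∈ G, ‖x j (t n)‖ ^ 2}.Infinite :=
    Nat.frequently_atTop_iff_infinite.mp hfreq
  set M : Set ℕ := {n : ℕ | c₁ / 2 < ∑ j ∈ G, ‖x j (t n)‖ ^ 2} with hM
  -- J is nonempty
  have hJne : Nonempty J := by
    by_contra h
    have : IsEmpty J := not_nonempty_iff.mp h
    rw [tsum_empty] at hlow
    linarith
  -- for each n in M, some j in G with x j (t n) ≠ 0
  have hex : ∀ n : ℕ, ∃ j : J, n ∈ M → j ∈ G ∧ x j (t n) ≠ 0 := by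
    intro n
    by_cases hn : n ∈ M
    case neg => exact ⟨Classical.arbitrary J, fun h => absurd h hn⟩
    have hne : (∑ j ∈ G, ‖x j (t n)‖ ^ 2) ≠ 0 := by
      have : (0 : ℝ) < ∑ j ∈ G, ‖x j (t n)‖ ^ 2 := lt_of_le_of_lt (by positivity) hn
      exact ne_of_gt this
    obtain ⟨j, hjG, hjne⟩ := Finset.exists_ne_zero_of_sum_ne_zero hne
    refine ⟨j, fun _ => ⟨hjG, ?_⟩⟩
    intro h
    exact hjne (by simp [h])
  choose g hg using hex
  have hg1 : ∀ n ∈ M, g n ∈ G := fun n hn => (hg n hn).1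
  have hg2 : ∀ n ∈ M, x (g n) (t n) ≠ 0 := fun n hn => (hg n hn).2
  -- g is injective on M
  have hinj : Set.InjOn g M := by
    intro m hm n hn hgeq
    by_contra hne
    rcases Ne.lt_or_gt hne with h | h
    · refine hdisj m n h ?_
      refine Set.mem_biUnion (show g m ∈ Jset (t m) from hg2 m hm) ?_
      rw [hgeq]
      exact hg2 n hn
    · refine hdisj n m h ?_
      refine Set.mem_biUnion (show g n ∈ Jset (t n) from hg2 n hn) ?_
      rw [← hgeq]
      exact hg2 m hm
  have hfin : M.Finite := by
    have himg : (g '' M).Finite :=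
      Set.Finite.subset G.finite_toSet (by rintro _ ⟨n, hn, rfl⟩; exact hg1 n hn)
    exact Set.Finite.of_finite_image himg hinj
  exact hMinf hfin
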